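/- Let G₁ = G₁⁽¹⁾ × ⋯ × G₁⁽ⁿ⁾ ⊆ ℂⁿ with each G₁⁽ʲ⁾ ⊆ ℂ nonempty, bounded and open, and let G₂ ⊆ ℂⁿ be open. Let A : ((Fin n → ℂ) → ℂ) →ₗ[ℂ] ((Fin n → ℂ) → ℂ) be a ℂ-linear map such that: (i) for every f holomorphic on G₁, A f is holomorphic on G₂; and (ii) for every compact set K ⊆ G₂ there exist a compact set L ⊆ G₁ and C > 0 such that ‖A f‖_K ≤ C ‖f‖_L for every f holomorphic on G₁. Then for every compact set K ⊆ G₂, every δ > 0 and every ε > 0 there exists R > 0 such that sup_{z ∈ K} |A(w ↦ ∏_{j=1}^n (w_j − ζ_j)⁻¹)(z)| ≤ ε whenever ζ ∈ ℂⁿ satisfies dist(ζ_j, G₁⁽ʲ⁾) ≥ δ for every j and ‖ζ‖ ≥ R. -/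
import Mathlib


/-- Decay at infinity of the operator kernel: for a bounded operator `A`
from `H(G₁)` (`G₁ = G₁⁽¹⁾ × ⋯ × G₁⁽ⁿ⁾` a product of nonempty bounded open planar sets)
to `H(G₂)`, the kernel `ζ ↦ A(w ↦ ∏ⱼ (wⱼ - ζⱼ)⁻¹)` tends to `0` uniformly on compact
subsets of `G₂` as `|ζ| → ∞` within the region where every coordinate stays at distance
at least `δ` from the corresponding factor `G₁⁽ʲ⁾`. -/
theorem stmt_17 (n : ℕ) (G1 : Fin n → Set ℂ)
    (hne : ∀ j, (G1 j).Nonempty) (hbd : ∀ j, Bornology.IsBounded (G1 j))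
    (hop : ∀ j, IsOpen (G1 j))
    (G2 : Set (Fin n → ℂ)) (hG2 : IsOpen G2)
    (A : ((Fin n → ℂ) → ℂ) →ₗ[ℂ] ((Fin n → ℂ) → ℂ))
    (hA1 : ∀ f : (Fin n → ℂ) → ℂ,
      DifferentiableOn ℂ f (Set.univ.pi G1) → DifferentiableOn ℂ (A f) G2)
    (hA2 : ∀ K : Set (Fin n → ℂ), IsCompact K → K ⊆ G2 →
      ∃ (L : Set (Fin n → ℂ)) (C : ℝ), IsCompact L ∧ L ⊆ Set.univ.pi G1 ∧ 0 < C ∧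
        ∀ f : (Fin n → ℂ) → ℂ, DifferentiableOn ℂ f (Set.univ.pi G1) →
          (⨆ z ∈ K, ‖A f z‖) ≤ C * ⨆ z ∈ L, ‖f z‖) :
    ∀ K : Set (Fin n → ℂ), IsCompact K → K ⊆ G2 →
      ∀ δ > (0 : ℝ), ∀ ε > (0 : ℝ), ∃ R > (0 : ℝ), ∀ ζ : Fin n → ℂ,
        (∀ j, δ ≤ Metric.infDist (ζ j) (G1 j)) → R ≤ ‖ζ‖ →
        ∀ z ∈ K, ‖A (fun w => ∏ j, (w j - ζ j)⁻¹) z‖ ≤ ε := by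
  intro K hK hKG2 δ hδ ε hε
  obtain ⟨L, C, hLc, hLsub, hC, hbound⟩ := hA2 K hK hKG2
  obtain ⟨M, hM⟩ := hLc.isBounded.exists_norm_le
  set M' : ℝ := max M 0 with hM'def
  have hM'0 : 0 ≤ M' := le_max_right _ _
  set B : ℝ := δ⁻¹ ^ (n - 1) with hBdef
  have hB : 0 < B := pow_pos (inv_pos.mpr hδ) _
  refine ⟨M' + 1 + C * B / ε, by positivity, ?_⟩
  intro ζ hζd hζR z hz
  set R : ℝ := M' + 1 + C * B / ε with hRdef
  have hR1 : (1 : ℝ) ≤ R := by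
    have : 0 ≤ C * B / ε := by positivity
    simp only [hRdef]; linarith
  rcases Nat.eq_zero_or_pos n with hn | hn
  · exfalso
    have : ζ = 0 := by
      subst hn; exact Subsingleton.elim _ _
    rw [this, norm_zero] at hζR
    linarith
  -- the kernel function
  set f : (Fin n → ℂ) → ℂ := fun w => ∏ j, (w j - ζ j)⁻¹ with hfdef
  -- on the pi set, each coordinate is at distance ≥ δ from ζ j
  have hdist : ∀ w ∈ Set.univ.pi G1, ∀ j, δ ≤ ‖w j - ζ j‖ := by
    intro w hw j
    have hwj : w j ∈ G1 j := hw j (Set.mem_univ j)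
    calc δ ≤ Metric.infDist (ζ j) (G1 j) := hζd j
      _ ≤ dist (ζ j) (w j) := Metric.infDist_le_dist_of_mem hwj
      _ = ‖w j - ζ j‖ := by rw [dist_eq_norm, norm_sub_rev]
  have hne0 : ∀ w ∈ Set.univ.pi G1, ∀ j, w j - ζ j ≠ 0 := by
    intro w hw j h
    have := hdist w hw j
    rw [h, norm_zero] at this
    linarith
  -- f is holomorphic on the pi set
  have hf : DifferentiableOn ℂ f (Set.univ.pi G1) := by
    have : ∀ s : Finset (Fin n),
        DifferentiableOn ℂ (fun w => ∏ j ∈ s, (w j - ζ j)⁻¹) (Set.univ.pi G1) := by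
      intro s
      induction s using Finset.induction_on with
      | empty => simp
      | @insert a s' hj ih =>
        simp only [Finset.prod_insert hj]
        refine DifferentiableOn.mul ?_ ih
        refine DifferentiableOn.inv ?_ (fun w hw => hne0 w hw a)
        have hproj : Differentiable ℂ (fun w : Fin n → ℂ => w a) :=
          (ContinuousLinearMap.proj (R := ℂ) (φ := fun _ : Fin n => ℂ) a).differentiable
        exact (hproj.sub_const (ζ a)).differentiableOn
    exact this Finset.univ
  -- choose a coordinate of maximal norm
  obtain ⟨j0, -, hj0⟩ := Finset.exists_max_image (Finset.univ : Finset (Fin n))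
    (fun j => ‖ζ j‖) (Finset.univ_nonempty_iff.mpr ⟨⟨0, hn⟩⟩)
  have hζj0 : R ≤ ‖ζ j0‖ := by
    refine le_trans hζR ?_
    exact (pi_norm_le_iff_of_nonneg (norm_nonneg _)).mpr (fun i => hj0 i (Finset.mem_univ i))
  -- bound ‖f w‖ on L
  have hRM : 0 < R - M' := by
    have : 0 ≤ C * B / ε := by positivity
    simp only [hRdef]; linarith
  have hfw : ∀ w ∈ L, ‖f w‖ ≤ (R - M')⁻¹ * B := by
    intro w hw
    have hwpi := hLsub hw
    have hnorm : ‖f w‖ = ∏ j, ‖w j - ζ j‖⁻¹ := by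
      simp only [hfdef, norm_prod, norm_inv]
    rw [hnorm, ← Finset.mul_prod_erase Finset.univ _ (Finset.mem_univ j0)]
    have h1 : ‖w j0 - ζ j0‖⁻¹ ≤ (R - M')⁻¹ := by
      refine inv_anti₀ hRM ?_
      have hwn : ‖w j0‖ ≤ M' := le_trans (le_trans (norm_le_pi_norm w j0) (hM w hw)) (le_max_left _ _)
      have : ‖ζ j0‖ - ‖w j0‖ ≤ ‖w j0 - ζ j0‖ := by
        rw [norm_sub_rev]
        have := norm_sub_norm_le (ζ j0) (w j0)
        linarith
      linarith
    have h2 : ∏ j ∈ Finset.univ.erase j0, ‖w j - ζ j‖⁻¹ ≤ B := by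
      have hcard : (Finset.univ.erase j0).card = n - 1 := by
        rw [Finset.card_erase_of_mem (Finset.mem_univ j0), Finset.card_univ, Fintype.card_fin]
      calc ∏ j ∈ Finset.univ.erase j0, ‖w j - ζ j‖⁻¹
          ≤ ∏ j ∈ Finset.univ.erase j0, δ⁻¹ := by
            refine Finset.prod_le_prod (fun j _ => by positivity) (fun j _ => ?_)
            exact inv_anti₀ hδ (hdist w hwpi j)
        _ = B := by rw [Finset.prod_const, hcard]
    have hnn : 0 ≤ ∏ j ∈ Finset.univ.erase j0, ‖w j - ζ j‖⁻¹ :=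
      Finset.prod_nonneg (fun j _ => by positivity)
    exact mul_le_mul h1 h2 hnn (by positivity)
  -- sup over L
  have hsupL : (⨆ z ∈ L, ‖f z‖) ≤ (R - M')⁻¹ * B := by
    refine Real.iSup_le (fun w => Real.iSup_le (fun hw => hfw w hw) (by positivity)) (by positivity)
  -- the operator bound
  have hKbd := hbound f hf
  -- pointwise bound from the sup over K
  have hcont : ContinuousOn (fun z => ‖A f z‖) K :=
    (((hA1 f hf).continuousOn).mono hKG2).norm
  have hptK : ‖A f z‖ ≤ ⨆ z ∈ K, ‖A f z‖ := by
    obtain ⟨b, hb⟩ := (hK.image_of_continuousOn hcont).isBounded.exists_norm_le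
    have hbd2 : BddAbove (Set.range fun z => ⨆ _ : z ∈ K, ‖A f z‖) := by
      refine ⟨max b 0, ?_⟩
      rintro x ⟨y, rfl⟩
      show (⨆ _ : y ∈ K, ‖A f y‖) ≤ max b 0
      by_cases hy : y ∈ K
      · rw [ciSup_pos hy]
        exact le_trans (le_abs_self _) (le_trans (hb _ ⟨y, hy, rfl⟩) (le_max_left _ _))
      · haveI : IsEmpty (y ∈ K) := ⟨hy⟩
        rw [Real.iSup_of_isEmpty]
        exact le_max_right _ _
    have := le_ciSup hbd2 z
    rwa [ciSup_pos hz] at this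
  have : ‖A f z‖ ≤ C * ((R - M')⁻¹ * B) := by
    refine le_trans hptK (le_trans hKbd ?_)
    exact mul_le_mul_of_nonneg_left hsupL (le_of_lt hC)
  refine le_trans this ?_
  -- C * ((R - M')⁻¹ * B) ≤ ε since R - M' ≥ C * B / ε
  have h3 : C * B / ε ≤ R - M' := by simp only [hRdef]; linarith
  rw [div_le_iff₀ hε] at h3  -- C * B ≤ (R - M') * ε
  calc C * ((R - M')⁻¹ * B) = (C * B) * (R - M')⁻¹ := by ring
    _ ≤ ((R - M') * ε) * (R - M')⁻¹ := by
        exact mul_le_mul_of_nonneg_right h3 (by positivity)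
    _ = ε := by field_simp
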